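/- Fix n ∈ ℕ, n ≥ 1, a leaf labeling x : {0,1}^n → {0,1}, and ε > 0. Let R be uniform on {1,…,n} and, independently given R, let Y be uniform on {0,1}^{n−R}. Then Pr[|ρ(Y0) − ρ(Y1)| ≥ ε] ≤ 4/(n·ε²), where Y0 and Y1 denote Y extended by the bit 0 and by the bit 1 respectively. -/

import Mathlib

open scoped Classical

/-- `rho x n i y` is `ρ(y)`: the fraction of 1-labeled leaves of the complete binary tree
of depth `n` whose index extends the length-`i` string `y`.  Strings are encoded
numerically in lexicographic (most-significant-bit-first) order: the length-`i` string
with numeric value `y < 2^i` corresponds to the block of leaves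
`[y·2^{n-i}, (y+1)·2^{n-i})`, and the leaf labeling is `x : ℕ → Bool` (restricted to
indices `< 2^n`). -/
noncomputable def rho (x : ℕ → Bool) (n i y : ℕ) : ℝ :=
  (((Finset.Ico (y * 2 ^ (n - i)) ((y + 1) * 2 ^ (n - i))).filter
      (fun j => x j = true)).card : ℝ) / 2 ^ (n - i)

/-- `Xwalk x n t z` is the martingale value `X(t) = ρ(z_1, …, z_t)` along the leaf `z`:
the density of 1-labels below the length-`t` prefix of the length-`n` string `z`
(numerically, the prefix of `z < 2^n` of length `t` is `z / 2^{n-t}`). -/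
noncomputable def Xwalk (x : ℕ → Bool) (n t z : ℕ) : ℝ :=
  rho x n t (z / 2 ^ (n - t))

lemma rho_nonneg (x : ℕ → Bool) (n i y : ℕ) : 0 ≤ rho x n i y := by
  unfold rho; positivity

lemma rho_le_one (x : ℕ → Bool) (n i y : ℕ) : rho x n i y ≤ 1 := by
  unfold rho
  rw [div_le_one (by positivity)]
  have h := Finset.card_filter_le (Finset.Ico (y * 2 ^ (n - i)) ((y + 1) * 2 ^ (n - i)))
      (fun j => x j = true)
  have h2 : (Finset.Ico (y * 2 ^ (n - i)) ((y + 1) * 2 ^ (n - i))).card = 2 ^ (n - i) := by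
    rw [Nat.card_Ico, Nat.add_mul, one_mul, Nat.add_sub_cancel_left]
  calc ((Finset.filter (fun j => x j = true) (Finset.Ico (y * 2 ^ (n - i)) ((y + 1) * 2 ^ (n - i)))).card : ℝ)
      ≤ ((Finset.Ico (y * 2 ^ (n - i)) ((y + 1) * 2 ^ (n - i))).card : ℝ) := by exact_mod_cast h
    _ = (2:ℝ) ^ (n - i) := by rw [h2]; push_cast; ring

lemma rho_split (x : ℕ → Bool) (n i y : ℕ) (h : i < n) :
    rho x n i y = (rho x n (i+1) (2*y) + rho x n (i+1) (2*y+1)) / 2 := by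
  have hk : n - i = (n - (i+1)) + 1 := by omega
  set k := n - (i+1) with hkdef
  unfold rho
  rw [hk]
  have h1 : y * 2 ^ (k+1) = 2*y * 2^k := by ring
  have h2 : (y+1) * 2 ^ (k+1) = (2*y+1+1) * 2^k := by ring
  rw [h1, h2]
  have hab : 2*y*2^k ≤ (2*y+1)*2^k := by nlinarith [Nat.one_le_two_pow (n := k)]
  have hbc : (2*y+1)*2^k ≤ (2*y+1+1)*2^k := by nlinarith [Nat.one_le_two_pow (n := k)]
  rw [← Finset.Ico_union_Ico_eq_Ico hab hbc, Finset.filter_union,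
    Finset.card_union_of_disjoint (Finset.disjoint_filter_filter
      (Finset.Ico_disjoint_Ico_consecutive _ _ _))]
  push_cast
  have : (2:ℝ)^(k+1) = 2 * 2^k := by ring
  rw [this]
  field_simp
  rw [← hkdef]; ring

lemma sum_two_mul (f : ℕ → ℝ) (m : ℕ) :
    ∑ z ∈ Finset.range (2*m), f z = ∑ y ∈ Finset.range m, (f (2*y) + f (2*y+1)) := by
  induction m with
  | zero => simp
  | succ m ih =>
    have : 2 * (m+1) = (2*m + 1) + 1 := by ring
    rw [this, Finset.sum_range_succ, Finset.sum_range_succ, Finset.sum_range_succ, ih]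
    ring

example (n : ℕ) (g : ℕ → ℝ) :
    ∑ r ∈ Finset.Icc 1 n, g (n - r) = ∑ i ∈ Finset.range n, g i := by
  apply Finset.sum_nbij' (fun r => n - r) (fun i => n - i) <;>
    intro a ha <;> simp [Finset.mem_Icc, Finset.mem_range] at * <;> omega

lemma reindex (g : ℕ → ℝ) (n : ℕ) :
    ∑ r ∈ Finset.Icc 1 n, g (n - r) = ∑ i ∈ Finset.range n, g i := by
  apply Finset.sum_nbij' (fun r => n - r) (fun i => n - i) <;>
    intro a ha <;> simp [Finset.mem_Icc, Finset.mem_range] at * <;> omega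

lemma key_telescope (x : ℕ → Bool) (n : ℕ) :
    ∑ i ∈ Finset.range n, ((2:ℝ)^i)⁻¹ *
      ∑ y ∈ Finset.range (2^i),
        (rho x n (i+1) (2*y) - rho x n (i+1) (2*y+1))^2 ≤ 4 := by
  set S : ℕ → ℝ := fun i => ((2:ℝ)^i)⁻¹ * ∑ y ∈ Finset.range (2^i), (rho x n i y)^2 with hS
  have hstep : ∀ i ∈ Finset.range n,
      ((2:ℝ)^i)⁻¹ * ∑ y ∈ Finset.range (2^i),
        (rho x n (i+1) (2*y) - rho x n (i+1) (2*y+1))^2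
      = 4 * (S (i+1) - S i) := by
    intro i hi
    have hi' : i < n := Finset.mem_range.mp hi
    have e1 : S (i+1) = ((2:ℝ)^i)⁻¹ * ∑ y ∈ Finset.range (2^i),
        ((2:ℝ)⁻¹ * ((rho x n (i+1) (2*y))^2 + (rho x n (i+1) (2*y+1))^2)) := by
      simp only [hS]
      rw [show (2:ℕ)^(i+1) = 2*2^i from by ring,
        sum_two_mul (fun z => (rho x n (i+1) z)^2),
        Finset.mul_sum, Finset.mul_sum]
      apply Finset.sum_congr rfl
      intro y _
      rw [pow_succ]
      ring
    rw [e1]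
    simp only [hS]
    rw [← mul_sub, ← Finset.sum_sub_distrib, Finset.mul_sum, Finset.mul_sum, Finset.mul_sum]
    apply Finset.sum_congr rfl
    intro y _
    rw [rho_split x n i y hi']
    ring
  rw [Finset.sum_congr rfl hstep, ← Finset.mul_sum, Finset.sum_range_sub]
  have h1 : S n ≤ 1 := by
    have hle : ∑ y ∈ Finset.range (2^n), (rho x n n y)^2 ≤ ((2:ℝ)^n) := by
      calc ∑ y ∈ Finset.range (2^n), (rho x n n y)^2
          ≤ ∑ _y ∈ Finset.range (2^n), (1:ℝ) := by
            apply Finset.sum_le_sum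
            intro y _
            have h1 := rho_le_one x n n y
            have h2 := rho_nonneg x n n y
            nlinarith
        _ = (2:ℝ)^n := by simp
    simp only [hS]
    rw [inv_mul_le_iff₀ (by positivity), mul_one]
    exact hle
  have h0 : 0 ≤ S 0 := by
    simp only [hS]
    positivity
  nlinarith

/-- Tail bound for sibling densities: for `R` uniform on `{1, …, n}` and, given `R`,
`Y` uniform on `{0,1}^{n-R}`, one has `Pr[|ρ(Y0) - ρ(Y1)| ≥ ε] ≤ 4/(n ε²)`.
(Numerically, the string `Y` of length `n - r` is uniform on `{0, …, 2^{n-r} - 1}`,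
and `Y0, Y1` have numeric values `2Y, 2Y + 1` at level `n - r + 1`.) -/
theorem sibling_density_tail_bound (n : ℕ) (hn : 1 ≤ n) (x : ℕ → Bool)
    (ε : ℝ) (hε : 0 < ε) :
    (1 / (n : ℝ)) * ∑ r ∈ Finset.Icc 1 n,
        (1 / (2 ^ (n - r) : ℝ)) * ∑ y ∈ Finset.range (2 ^ (n - r)),
          (if ε ≤ |rho x n (n - r + 1) (2 * y) - rho x n (n - r + 1) (2 * y + 1)|
            then (1 : ℝ) else 0)
      ≤ 4 / (n * ε ^ 2) := by
  set g : ℕ → ℝ := fun i =>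
    (1 / (2 ^ i : ℝ)) * ∑ y ∈ Finset.range (2 ^ i),
      (if ε ≤ |rho x n (i + 1) (2 * y) - rho x n (i + 1) (2 * y + 1)|
        then (1 : ℝ) else 0) with hg
  have hind : ∀ i y : ℕ,
      (if ε ≤ |rho x n (i+1) (2*y) - rho x n (i+1) (2*y+1)| then (1:ℝ) else 0)
      ≤ (rho x n (i+1) (2*y) - rho x n (i+1) (2*y+1))^2 / ε^2 := by
    intro i y
    set d := rho x n (i+1) (2*y) - rho x n (i+1) (2*y+1) with hd
    split_ifs with h
    · rw [le_div_iff₀ (by positivity), one_mul]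
      have : ε^2 ≤ |d|^2 := by nlinarith [abs_nonneg d]
      calc ε^2 ≤ |d|^2 := this
        _ = d^2 := sq_abs d
    · positivity
  have hgi : ∀ i ∈ Finset.range n, g i ≤
      (1/ε^2) * (((2:ℝ)^i)⁻¹ * ∑ y ∈ Finset.range (2^i),
        (rho x n (i+1) (2*y) - rho x n (i+1) (2*y+1))^2) := by
    intro i _
    simp only [hg]
    have hs : ∑ y ∈ Finset.range (2^i),
        (if ε ≤ |rho x n (i+1) (2*y) - rho x n (i+1) (2*y+1)| then (1:ℝ) else 0)
        ≤ ∑ y ∈ Finset.range (2^i),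
          (rho x n (i+1) (2*y) - rho x n (i+1) (2*y+1))^2 / ε^2 :=
      Finset.sum_le_sum (fun y _ => hind i y)
    calc (1 / (2 ^ i : ℝ)) * ∑ y ∈ Finset.range (2 ^ i),
          (if ε ≤ |rho x n (i + 1) (2 * y) - rho x n (i + 1) (2 * y + 1)|
            then (1 : ℝ) else 0)
        ≤ (1 / (2 ^ i : ℝ)) * ∑ y ∈ Finset.range (2^i),
            (rho x n (i+1) (2*y) - rho x n (i+1) (2*y+1))^2 / ε^2 := by
          apply mul_le_mul_of_nonneg_left hs (by positivity)
      _ = (1/ε^2) * (((2:ℝ)^i)⁻¹ * ∑ y ∈ Finset.range (2^i),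
            (rho x n (i+1) (2*y) - rho x n (i+1) (2*y+1))^2) := by
          rw [← Finset.sum_div]
          field_simp
  have hsum : ∑ r ∈ Finset.Icc 1 n, g (n - r) ≤ 4 / ε^2 := by
    rw [reindex g n]
    calc ∑ i ∈ Finset.range n, g i
        ≤ ∑ i ∈ Finset.range n, (1/ε^2) * (((2:ℝ)^i)⁻¹ *
            ∑ y ∈ Finset.range (2^i),
              (rho x n (i+1) (2*y) - rho x n (i+1) (2*y+1))^2) :=
          Finset.sum_le_sum hgi
      _ = (1/ε^2) * ∑ i ∈ Finset.range n, ((2:ℝ)^i)⁻¹ *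
            ∑ y ∈ Finset.range (2^i),
              (rho x n (i+1) (2*y) - rho x n (i+1) (2*y+1))^2 := by
          rw [Finset.mul_sum]
      _ ≤ (1/ε^2) * 4 := by
          apply mul_le_mul_of_nonneg_left (key_telescope x n) (by positivity)
      _ = 4 / ε^2 := by ring
  have hn0 : (0:ℝ) < n := by exact_mod_cast hn
  calc (1 / (n : ℝ)) * ∑ r ∈ Finset.Icc 1 n, g (n - r)
      ≤ (1 / (n : ℝ)) * (4 / ε^2) := by
        apply mul_le_mul_of_nonneg_left hsum (by positivity)
    _ = 4 / (n * ε ^ 2) := by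
        rw [div_mul_div_comm, one_mul]
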